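/- arXiv:2101.04265 — 4 statements merged into one kernel-verified Lean document; each statement's English description precedes it below -/
import Mathlib

section
/- Let G be a permutation group on Ω containing a regular dihedral subgroup D, and let Γ be a connected orbital graph of G (so Γ is a connected Cayley graph Cay(D,S) of D). Then Γ is undirected, i.e., the connection set S satisfies S = S^{-1}. -/
open Equiv DihedralGroup

theorem Equiv.Perm.inv_apply_self {α : Type*} (f : Equiv.Perm α) (x : α) : f⁻¹ (f x) = x :=
  f.symm_apply_apply x

theorem Equiv.Perm.apply_inv_self {α : Type*} (f : Equiv.Perm α) (x : α) : f (f⁻¹ x) = x :=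
  f.apply_symm_apply x

private def dihSign {n : ℕ} : DihedralGroup n → ZMod 2
  | .r _ => 0
  | .sr _ => 1

private lemma dihSign_mul {n : ℕ} (a b : DihedralGroup n) :
    dihSign (a * b) = dihSign a + dihSign b := by
  cases a <;> cases b <;>
    simp [dihSign, DihedralGroup.r_mul_r, DihedralGroup.r_mul_sr,
      DihedralGroup.sr_mul_r, DihedralGroup.sr_mul_sr] <;> decide

private lemma dihSign_one {n : ℕ} : dihSign (1 : DihedralGroup n) = 0 := by
  rw [DihedralGroup.one_def]; rfl

/-- Let `G ≤ Sym(Ω)` contain a regular dihedral subgroup `D ≅ D_{2n}`,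
and let `Γ` be a connected orbital graph of `G`, with arc set `A = (ω₁,ω₂)^G`.
Then `Γ` is undirected: the arc set `A` is symmetric (equivalently, under the
identification of `Γ` with a Cayley graph `Cay(D,S)`, `S = S⁻¹`). -/
theorem stmt3 {Ω : Type*} [Finite Ω] (n : ℕ) (hn : 1 ≤ n)
    (G D : Subgroup (Equiv.Perm Ω)) (hDG : D ≤ G)
    (hdih : Nonempty (D ≃* DihedralGroup n))
    (htrans : ∀ x y : Ω, ∃ d ∈ D, d x = y)
    (hfree : ∀ d ∈ D, ∀ x : Ω, d x = x → d = 1)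
    (ω₁ ω₂ : Ω) (hne : ω₁ ≠ ω₂)
    (A : Set (Ω × Ω))
    (hA : A = {p : Ω × Ω | ∃ g ∈ G, p = (g ω₁, g ω₂)})
    (hconn : ∀ x y : Ω,
      Relation.ReflTransGen (fun u v => (u, v) ∈ A ∨ (v, u) ∈ A) x y) :
    ∀ x y : Ω, (x, y) ∈ A → (y, x) ∈ A := by
  obtain ⟨φ⟩ := hdih
  -- A is G-invariant
  have hinv : ∀ g ∈ G, ∀ p : Ω × Ω, p ∈ A → (g p.1, g p.2) ∈ A := by
    intro g hg p hp
    rw [hA] at hp ⊢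
    obtain ⟨k, hk, hpk⟩ := hp
    refine ⟨g * k, mul_mem hg hk, ?_⟩
    simp [hpk, Equiv.Perm.mul_apply]
  -- transitivity of D, in subtype form
  have htrans' : ∀ x : Ω, ∃ e : D, (e : Perm Ω) ω₁ = x := by
    intro x
    obtain ⟨d, hd, hdx⟩ := htrans ω₁ x
    exact ⟨⟨d, hd⟩, hdx⟩
  -- regularity: uniqueness
  have huniq : ∀ d e : D, (d : Perm Ω) ω₁ = (e : Perm Ω) ω₁ → d = e := by
    intro d e h
    have hmem : ((e : Perm Ω)⁻¹ * d) ∈ D := mul_mem (inv_mem e.2) d.2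
    have hfix : ((e : Perm Ω)⁻¹ * (d : Perm Ω)) ω₁ = ω₁ := by
      rw [Equiv.Perm.mul_apply, h, Equiv.Perm.inv_apply_self]
    have := hfree _ hmem ω₁ hfix
    have : (d : Perm Ω) = e := by
      have h2 := congrArg (fun z => (e : Perm Ω) * z) this
      simpa [mul_assoc] using h2
    exact Subtype.ext this
  -- key: find an involution g ∈ D with (ω₁, g ω₁) ∈ A
  have key : ∃ g : D, (ω₁, (g : Perm Ω) ω₁) ∈ A ∧ (g : Perm Ω) * (g : Perm Ω) = 1 := by
    by_contra hcon
    push_neg at hcon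
    -- every "connection" element is a rotation
    have hrot : ∀ g : D, (ω₁, (g : Perm Ω) ω₁) ∈ A → dihSign (φ g) = 0 := by
      intro g hg
      rcases hcase : φ g with i | i
      · simp [dihSign]
      · exfalso
        apply hcon g hg
        have h1 : φ (g * g) = 1 := by
          rw [map_mul, hcase, DihedralGroup.sr_mul_self]
        have h2 : g * g = 1 := φ.injective (by rw [h1, map_one])
        have := congrArg (fun z : D => (z : Perm Ω)) h2
        simpa using this
    -- walk invariant
    have hQ : ∀ x : Ω, ∃ e : D, (e : Perm Ω) ω₁ = x ∧ dihSign (φ e) = 0 := by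
      intro x
      have hwalk := hconn ω₁ x
      induction hwalk with
      | refl =>
        refine ⟨1, ?_, by rw [map_one, dihSign_one]⟩
        simp
      | @tail b c hb hstep ih =>
        obtain ⟨d, hd1, hd2⟩ := ih
        rcases hstep with harc | harc
        · -- (b, c) ∈ A
          have hmemG : (d : Perm Ω)⁻¹ ∈ G := inv_mem (hDG d.2)
          have h3 := hinv _ hmemG (b, c) harc
          simp only at h3
          rw [← hd1, Equiv.Perm.inv_apply_self] at h3
          obtain ⟨e₀, he₀⟩ := htrans' ((d : Perm Ω)⁻¹ c)
          rw [← he₀] at h3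
          have he₀0 : dihSign (φ e₀) = 0 := hrot e₀ h3
          refine ⟨d * e₀, ?_, ?_⟩
          · push_cast [Equiv.Perm.mul_apply]
            rw [he₀, Equiv.Perm.apply_inv_self]
          · rw [map_mul, dihSign_mul, hd2, he₀0, add_zero]
        · -- (c, b) ∈ A
          obtain ⟨e₀, he₀⟩ := htrans' c
          have hmemG : ((e₀ : Perm Ω))⁻¹ ∈ G := inv_mem (hDG e₀.2)
          have h3 := hinv _ hmemG (c, b) harc
          simp only at h3
          rw [← he₀, Equiv.Perm.inv_apply_self] at h3
          -- (ω₁, e₀⁻¹ b) ∈ A with e₀⁻¹ b = (e₀⁻¹ * d) ω₁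
          have hb' : ((e₀ : Perm Ω))⁻¹ b = ((e₀⁻¹ * d : D) : Perm Ω) ω₁ := by
            push_cast [Equiv.Perm.mul_apply]
            rw [hd1]
          rw [hb'] at h3
          have h0 : dihSign (φ (e₀⁻¹ * d)) = 0 := hrot _ h3
          rw [map_mul, map_inv, dihSign_mul] at h0
          have hsign : dihSign (φ e₀) = 0 := by
            have hinv0 : dihSign ((φ e₀)⁻¹) + dihSign (φ e₀) = 0 := by
              rw [← dihSign_mul, inv_mul_cancel, dihSign_one]
            rw [hd2, add_zero] at h0
            rw [h0, zero_add] at hinv0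
            exact hinv0
          exact ⟨e₀, he₀, hsign⟩
    -- contradiction with φ.symm (sr 0)
    obtain ⟨e, he1, he2⟩ := hQ (((φ.symm (DihedralGroup.sr 0) : D) : Perm Ω) ω₁)
    have : e = φ.symm (DihedralGroup.sr 0) := huniq _ _ he1
    rw [this, MulEquiv.apply_symm_apply] at he2
    simp [dihSign] at he2
  -- now finish
  obtain ⟨g, hgA, hg2⟩ := key
  have hgG : (g : Perm Ω) ∈ G := hDG g.2
  have hrev : ((g : Perm Ω) ω₁, ω₁) ∈ A := by
    have := hinv _ hgG (ω₁, (g : Perm Ω) ω₁) hgA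
    simp only at this
    have h2 : (g : Perm Ω) ((g : Perm Ω) ω₁) = ω₁ := by
      rw [← Equiv.Perm.mul_apply, hg2]; rfl
    rwa [h2] at this
  -- hence (ω₂, ω₁) ∈ A
  have hsym : (ω₂, ω₁) ∈ A := by
    rw [hA] at hgA hrev ⊢
    obtain ⟨h, hh, heq⟩ := hgA
    obtain ⟨k, hk, heq'⟩ := hrev
    have h1 : h ω₁ = ω₁ := (congrArg Prod.fst heq).symm
    have h2 : h ω₂ = (g : Perm Ω) ω₁ := (congrArg Prod.snd heq).symm
    have k1 : k ω₁ = (g : Perm Ω) ω₁ := (congrArg Prod.fst heq').symm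
    have k2 : k ω₂ = ω₁ := (congrArg Prod.snd heq').symm
    refine ⟨h⁻¹ * k, mul_mem (inv_mem hh) hk, ?_⟩
    have e1 : (h⁻¹ * k) ω₁ = ω₂ := by
      rw [Equiv.Perm.mul_apply, k1, ← h2, Equiv.Perm.inv_apply_self]
    have e2 : (h⁻¹ * k) ω₂ = ω₁ := by
      rw [Equiv.Perm.mul_apply, k2]
      nth_rewrite 1 [← h1]
      rw [Equiv.Perm.inv_apply_self]
    rw [e1, e2]
  intro x y hxy
  rw [hA] at hxy
  obtain ⟨h, hh, heq⟩ := hxy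
  have := hinv h hh (ω₂, ω₁) hsym
  simp only at this
  have hx : x = h ω₁ := congrArg Prod.fst heq
  have hy : y = h ω₂ := congrArg Prod.snd heq
  rw [hx, hy]
  exact this
end

section
/- Let q ≡ 3 (mod 4) be a prime power, G = PGL(2,q), H = [q] ⋊ Z_{(q-1)/2} a subgroup of index 2 in a Borel subgroup, and D ≅ D_{2(q+1)} a dihedral maximal subgroup of G. Then H ∩ D = 1 and |G| = |H|·|D|, hence G = DH and D acts regularly on the coset space [G : H] of size 2(q+1). -/
private lemma copAux {a b m : ℕ} (h : m * b = a + 1) : Nat.Coprime a b := by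
  have h1 := Nat.gcd_dvd_left a b
  have h2 := Nat.gcd_dvd_right a b
  have h3 : Nat.gcd a b ∣ m * b - a := Nat.dvd_sub (h2.mul_left m) h1
  rw [h, Nat.add_sub_cancel_left] at h3
  exact Nat.dvd_one.mp h3

open Matrix in
private lemma GL2_center_card (F : Type*) [Field F] [Fintype F] :
    Nat.card (Subgroup.center (GL (Fin 2) F)) = Fintype.card F - 1 := by
  classical
  let ψ : Fˣ → Subgroup.center (GL (Fin 2) F) := fun u =>
    ⟨Units.map (Matrix.scalar (Fin 2)).toMonoidHom u, Subgroup.mem_center_iff.mpr fun g => by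
      ext : 1
      exact (Matrix.scalar_commute (u : F) (fun r => Commute.all _ _)
        (g : Matrix (Fin 2) (Fin 2) F)).eq.symm⟩
  have hbij : Function.Bijective ψ := by
    constructor
    · intro u v huv
      have : (Matrix.scalar (Fin 2)) (u : F) = (Matrix.scalar (Fin 2)) (v : F) := by
        have := congrArg (fun x => ((x : Subgroup.center (GL (Fin 2) F)) :
          GL (Fin 2) F).val) huv
        simpa [ψ] using this
      exact Units.ext ((Matrix.scalar_inj).mp this)
    · rintro ⟨z, hz⟩
      have comm : ∀ t : TransvectionStruct (Fin 2) F,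
          Commute t.toMatrix (z : Matrix (Fin 2) (Fin 2) F) := by
        intro t
        have hu := Subgroup.mem_center_iff.mp hz
          ⟨t.toMatrix, t.inv.toMatrix, t.mul_inv, t.inv_mul⟩
        exact congrArg Units.val hu
      obtain ⟨r, hr⟩ := Matrix.mem_range_scalar_of_commute_transvectionStruct comm
      have hr0 : r ≠ 0 := by
        rintro rfl
        have h1 : (z : Matrix (Fin 2) (Fin 2) F) * ((z⁻¹ : GL (Fin 2) F) :
            Matrix (Fin 2) (Fin 2) F) = 1 := by
          rw [← Units.val_mul, mul_inv_cancel, Units.val_one]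
        rw [← hr] at h1
        simp only [map_zero, zero_mul] at h1
        have := congrFun (congrFun h1 0) 0
        simp [Matrix.one_apply] at this
      refine ⟨Units.mk0 r hr0, ?_⟩
      apply Subtype.ext
      apply Units.ext
      exact hr
  rw [← Nat.card_eq_of_bijective ψ hbij, Nat.card_units, Nat.card_eq_fintype_card]

/-- `PGL(2,F)`: the quotient of `GL(2,F)` by its center. -/
abbrev PGLTwo (F : Type*) [Field F] :=
  Matrix.GeneralLinearGroup (Fin 2) F ⧸
    Subgroup.center (Matrix.GeneralLinearGroup (Fin 2) F)

/-- Let `q ≡ 3 (mod 4)` be a prime power, `G = PGL(2,q)`,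
`H = [q] ⋊ Z_{(q-1)/2}` a subgroup of index 2 of a Borel subgroup (so `|H| = q(q-1)/2`,
with a normal subgroup of order `q` and cyclic quotient) and `D ≅ D_{2(q+1)}` dihedral.
Then `H ∩ D = 1`, `|G| = |H|·|D|`, hence `G = DH` and `D` acts regularly on `[G : H]`,
a set of size `2(q+1)`. -/
theorem stmt9 (q : ℕ) (F : Type*) [Field F] [Fintype F]
    (hq : Fintype.card F = q) (h4 : q % 4 = 3)
    (H D : Subgroup (PGLTwo F))
    (hHcard : Nat.card H = q * (q - 1) / 2)
    (hHstr : ∃ N : Subgroup H, N.Normal ∧ Nat.card N = q ∧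
      ∃ h : H, ∀ x : H, ∃ k : ℤ, h ^ k * x⁻¹ ∈ N)
    (hDcard : Nat.card D = 2 * (q + 1))
    (hdih : Nonempty (D ≃* DihedralGroup (q + 1))) :
    H ⊓ D = ⊥ ∧
    Nat.card (PGLTwo F) = Nat.card H * Nat.card D ∧
    (∀ g : PGLTwo F, ∃ d ∈ D, ∃ h ∈ H, g = d * h) ∧
    Nat.card (PGLTwo F ⧸ H) = 2 * (q + 1) ∧
    (∀ x y : PGLTwo F ⧸ H, ∃ d ∈ D, d • x = y) ∧
    (∀ d ∈ D, ∀ x : PGLTwo F ⧸ H, d • x = x → d = 1) := by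
  classical
  obtain ⟨k, rfl⟩ : ∃ k, q = 4 * k + 3 := ⟨q / 4, by omega⟩
  -- cardinality of GL(2,q)
  have hGL : Nat.card (GL (Fin 2) F) =
      ((4 * k + 3) ^ 2 - 1) * ((4 * k + 3) ^ 2 - (4 * k + 3)) := by
    rw [Matrix.card_GL_field, hq, Fin.prod_univ_two]
    norm_num
  -- cardinality of the center
  have hcen : Nat.card (Subgroup.center (GL (Fin 2) F)) = 4 * k + 2 := by
    rw [GL2_center_card, hq]
    omega
  -- cardinality of PGL(2,q)
  have hG : Nat.card (PGLTwo F) = (4 * k + 3) * (4 * k + 2) * (4 * k + 4) := by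
    have h2 := Subgroup.card_eq_card_quotient_mul_card_subgroup
      (Subgroup.center (GL (Fin 2) F))
    rw [hGL, hcen] at h2
    have e1 : (4 * k + 3) ^ 2 - 1 = 16 * k ^ 2 + 24 * k + 8 := by
      rw [show (4 * k + 3) ^ 2 = 16 * k ^ 2 + 24 * k + 8 + 1 by ring, Nat.add_sub_cancel]
    have e2 : (4 * k + 3) ^ 2 - (4 * k + 3) = 16 * k ^ 2 + 20 * k + 6 := by
      rw [show (4 * k + 3) ^ 2 = 16 * k ^ 2 + 20 * k + 6 + (4 * k + 3) by ring,
        Nat.add_sub_cancel]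
    rw [e1, e2] at h2
    refine Nat.eq_of_mul_eq_mul_right (show 0 < 4 * k + 2 by omega) ?_
    rw [← h2]
    ring
  have hH' : Nat.card H = (4 * k + 3) * (2 * k + 1) := by
    rw [hHcard, show 4 * k + 3 - 1 = 4 * k + 2 by omega,
      show (4 * k + 3) * (4 * k + 2) = (4 * k + 3) * (2 * k + 1) * 2 by ring,
      Nat.mul_div_cancel _ (by norm_num)]
  have hD' : Nat.card D = 8 * k + 8 := by rw [hDcard]; omega
  -- |G| = |H| * |D|
  have hG2 : Nat.card (PGLTwo F) = Nat.card H * Nat.card D := by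
    rw [hG, hH', hD']; ring
  -- coprimality
  have cop : Nat.Coprime (Nat.card H) (Nat.card D) := by
    rw [hH', hD', show 8 * k + 8 = 8 * (k + 1) by ring]
    have c2a : Nat.Coprime (4 * k + 3) 2 := copAux (m := 2 * k + 2) (by ring)
    have c2b : Nat.Coprime (2 * k + 1) 2 := copAux (m := k + 1) (by ring)
    have c8a : Nat.Coprime (4 * k + 3) 8 := by
      rw [show (8 : ℕ) = 2 ^ 3 by norm_num]; exact c2a.pow_right 3
    have c8b : Nat.Coprime (2 * k + 1) 8 := by
      rw [show (8 : ℕ) = 2 ^ 3 by norm_num]; exact c2b.pow_right 3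
    have cka : Nat.Coprime (4 * k + 3) (k + 1) := copAux (m := 4) (by ring)
    have ckb : Nat.Coprime (2 * k + 1) (k + 1) := copAux (m := 2) (by ring)
    exact Nat.Coprime.mul (c8a.mul_right cka) (c8b.mul_right ckb)
  -- H ⊓ D = ⊥
  have hinf : H ⊓ D = ⊥ := by
    have d1 : Nat.card (H ⊓ D : Subgroup (PGLTwo F)) ∣ Nat.card H :=
      Subgroup.card_dvd_of_le inf_le_left
    have d2 : Nat.card (H ⊓ D : Subgroup (PGLTwo F)) ∣ Nat.card D :=
      Subgroup.card_dvd_of_le inf_le_right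
    have := Nat.dvd_gcd d1 d2
    rw [cop] at this
    exact Subgroup.card_eq_one.mp (Nat.dvd_one.mp this)
  -- card of the quotient
  have hquot : Nat.card (PGLTwo F ⧸ H) = 8 * k + 8 := by
    have h2 := Subgroup.card_eq_card_quotient_mul_card_subgroup H
    rw [hG, hH'] at h2
    refine Nat.eq_of_mul_eq_mul_right
      (show 0 < (4 * k + 3) * (2 * k + 1) by positivity) ?_
    rw [← h2]; ring
  -- the bijection D → G/H
  let φ : D → PGLTwo F ⧸ H := fun d => QuotientGroup.mk d.val
  have hinj : Function.Injective φ := by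
    intro d1 d2 h
    have hmem : d1.val⁻¹ * d2.val ∈ H := QuotientGroup.eq.mp h
    have hmemD : d1.val⁻¹ * d2.val ∈ D := mul_mem (inv_mem d1.2) d2.2
    have : d1.val⁻¹ * d2.val ∈ H ⊓ D := ⟨hmem, hmemD⟩
    rw [hinf, Subgroup.mem_bot] at this
    exact Subtype.ext (by rw [← mul_inv_cancel_left d1.val d2.val]; rw [this]; group)
  have hbij : Function.Bijective φ :=
    (Nat.bijective_iff_injective_and_card φ).mpr ⟨hinj, by rw [hD', hquot]⟩
  refine ⟨hinf, hG2, ?_, by rw [hquot]; ring, ?_, ?_⟩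
  · intro g
    obtain ⟨d, hd⟩ := hbij.2 (QuotientGroup.mk g)
    have hmem : d.val⁻¹ * g ∈ H := QuotientGroup.eq.mp hd
    exact ⟨d.val, d.2, d.val⁻¹ * g, hmem, by group⟩
  · intro x y
    obtain ⟨d1, hd1⟩ := hbij.2 x
    obtain ⟨d2, hd2⟩ := hbij.2 y
    refine ⟨d2.val * d1.val⁻¹, mul_mem d2.2 (inv_mem d1.2), ?_⟩
    rw [← hd1, ← hd2]
    show (d2.val * d1.val⁻¹) • (QuotientGroup.mk d1.val) = _
    rw [MulAction.Quotient.smul_mk]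
    norm_num
    rfl
  · intro d hd x hx
    obtain ⟨d1, hd1⟩ := hbij.2 x
    have : φ ⟨d * d1.val, mul_mem hd d1.2⟩ = φ d1 := by
      show QuotientGroup.mk (d * d1.val) = QuotientGroup.mk d1.val
      rw [← smul_eq_mul, ← MulAction.Quotient.smul_mk]
      exact (congrArg (d • ·) hd1).trans (hx.trans hd1.symm)
    have h2 := hinj this
    have h3 : d * d1.val = d1.val := congrArg Subtype.val h2
    exact mul_right_cancel (h3.trans (one_mul d1.val).symm)
end

section
/- Let G be a transitive permutation group on Ω containing a regular dihedral subgroup R, let 𝓑 be a minimal block system with |𝓑| ≥ 3 and block size |B| = 4, and suppose the kernel K of G on 𝓑 is an elementary abelian 2-group. Then R ∩ K ≅ Z₂ and G/K, acting on 𝓑, contains a regular cyclic subgroup (i.e., G^𝓑 is a c-group of degree |Ω|/4). -/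
open DihedralGroup

private lemma perm_image_mul {Ω : Type*} (σ τ : Equiv.Perm Ω) (B : Set Ω) :
    (σ * τ) '' B = σ '' (τ '' B) := by
  rw [← Set.image_comp]; rfl

private lemma perm_image_inv {Ω : Type*} (σ : Equiv.Perm Ω) {B C : Set Ω}
    (h : σ '' B = C) : (σ⁻¹ : Equiv.Perm Ω) '' C = B := by
  rw [← h, ← perm_image_mul]
  simp

private lemma r_inv {n : ℕ} (i : ZMod n) : (r i : DihedralGroup n)⁻¹ = r (-i) := by
  apply inv_eq_of_mul_eq_one_right
  rw [r_mul_r]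
  simp

private lemma sr_inv {n : ℕ} (i : ZMod n) : (sr i : DihedralGroup n)⁻¹ = sr i :=
  inv_eq_of_mul_eq_one_right (sr_mul_self i)

private lemma dihedral_conj_r {n : ℕ} (y : DihedralGroup n) (i : ZMod n) :
    y * r i * y⁻¹ = r i ∨ y * r i * y⁻¹ = (r i)⁻¹ := by
  cases y with
  | r j =>
    left
    rw [r_inv, r_mul_r, r_mul_r]
    congr 1
    ring
  | sr j =>
    right
    rw [sr_inv, sr_mul_r, sr_mul_sr, r_inv]
    congr 1
    ring

private def rotSub (n : ℕ) : Subgroup (DihedralGroup n) where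
  carrier := {x | ∃ i, x = r i}
  one_mem' := ⟨0, one_def⟩
  mul_mem' := by rintro _ _ ⟨i, rfl⟩ ⟨k, rfl⟩; exact ⟨i + k, r_mul_r i k⟩
  inv_mem' := by rintro _ ⟨i, rfl⟩; exact ⟨-i, r_inv i⟩

private lemma mem_rotSub {n : ℕ} {x : DihedralGroup n} : x ∈ rotSub n ↔ ∃ i, x = r i :=
  Iff.rfl

private lemma zmod_two_val {n : ℕ} [NeZero n] {i : ZMod n} (h : i + i = 0) :
    i = 0 ∨ 2 * i.val = n := by
  have h1 : ((i.val + i.val : ℕ) : ZMod n) = 0 := by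
    rw [Nat.cast_add, ZMod.natCast_rightInverse i, h]
  have h2 : n ∣ i.val + i.val := (ZMod.natCast_eq_zero_iff _ _).mp h1
  have h3 : i.val < n := ZMod.val_lt i
  rcases Nat.eq_zero_or_pos i.val with h0 | hpos
  · left
    rw [← ZMod.natCast_rightInverse i, h0, Nat.cast_zero]
  · right
    obtain ⟨c, hc⟩ := h2
    have hcpos : 0 < c := by
      rcases Nat.eq_zero_or_pos c with rfl | h; · omega
      · exact h
    have hclt : c < 2 := by
      by_contra hge
      push_neg at hge
      have : n * 2 ≤ n * c := Nat.mul_le_mul_left n hge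
      omega
    have hce : c = 1 := by omega
    rw [hce, Nat.mul_one] at hc
    omega

/-- Let `G` be transitive on `Ω` with a regular dihedral subgroup `R`,
let `𝓑` be a minimal block system with at least `3` blocks, each of size `4`, and
suppose the kernel `K` is an elementary abelian `2`-group. Then `R ∩ K ≅ Z₂`
(it has order `2`) and `G/K` acting on `𝓑` contains a regular cyclic subgroup:
some `g ∈ G` has powers acting transitively on `𝓑`, with any power fixing one block
fixing all blocks (i.e. `G^𝓑` is a c-group of degree `|Ω|/4`). -/
theorem stmt16 {Ω : Type*} [Finite Ω] (n : ℕ) (hn : 1 ≤ n)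
    (G R K : Subgroup (Equiv.Perm Ω)) (hRG : R ≤ G)
    (hGtrans : ∀ x y : Ω, ∃ g ∈ G, g x = y)
    (hdih : Nonempty (R ≃* DihedralGroup n))
    (hRtrans : ∀ x y : Ω, ∃ d ∈ R, d x = y)
    (hRfree : ∀ d ∈ R, ∀ x : Ω, d x = x → d = 1)
    (𝓑 : Set (Set Ω)) (hpart : Setoid.IsPartition 𝓑)
    (hinv : ∀ g ∈ G, ∀ B ∈ 𝓑, (g : Equiv.Perm Ω) '' B ∈ 𝓑)
    (hmin : ∀ B ∈ 𝓑,
      (∀ x ∈ B, ∀ y ∈ B, ∃ g ∈ G, (g : Equiv.Perm Ω) '' B = B ∧ g x = y) ∧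
      (∀ C ⊆ B, (∀ g ∈ G, (g : Equiv.Perm Ω) '' B = B →
          ((g : Equiv.Perm Ω) '' C = C ∨ Disjoint ((g : Equiv.Perm Ω) '' C) C)) →
        C.Subsingleton ∨ C = B))
    (hsize : ∀ B ∈ 𝓑, B.ncard = 4)
    (hthree : ∃ B₁ ∈ 𝓑, ∃ B₂ ∈ 𝓑, ∃ B₃ ∈ 𝓑, B₁ ≠ B₂ ∧ B₁ ≠ B₃ ∧ B₂ ≠ B₃)
    (hK : ∀ g : Equiv.Perm Ω, g ∈ K ↔ g ∈ G ∧ ∀ B ∈ 𝓑, g '' B = B)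
    (hEA : ∀ g ∈ K, g ^ 2 = 1) :
    Nat.card (R ⊓ K : Subgroup (Equiv.Perm Ω)) = 2 ∧
    ∃ g ∈ G,
      (∀ B₁ ∈ 𝓑, ∀ B₂ ∈ 𝓑, ∃ j : ℤ, (g ^ j) '' B₁ = B₂) ∧
      (∀ j : ℤ, ∀ B ∈ 𝓑, (g ^ j) '' B = B → ∀ C ∈ 𝓑, (g ^ j) '' C = C) := by
  haveI : NeZero n := ⟨by omega⟩
  obtain ⟨φ⟩ := hdih
  obtain ⟨hnotempty, hex⟩ := hpart
  -- two blocks sharing a point are equal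
  have hdisj : ∀ B ∈ 𝓑, ∀ B' ∈ 𝓑, ∀ x, x ∈ B → x ∈ B' → B = B' := by
    intro B hB B' hB' x hx hx'
    obtain ⟨b, -, hu⟩ := hex x
    rw [hu B ⟨hB, hx⟩, hu B' ⟨hB', hx'⟩]
  have hBne : ∀ B ∈ 𝓑, B.Nonempty := fun B hB =>
    Set.nonempty_of_ncard_ne_zero (by rw [hsize B hB]; omega)
  have himg : ∀ d : ↥R, ∀ B ∈ 𝓑, (↑d : Equiv.Perm Ω) '' B ∈ 𝓑 :=
    fun d B hB => hinv d (hRG d.2) B hB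
  -- R is transitive on blocks
  have htransB : ∀ B ∈ 𝓑, ∀ B' ∈ 𝓑, ∃ d : ↥R, (↑d : Equiv.Perm Ω) '' B = B' := by
    intro B hB B' hB'
    obtain ⟨x, hx⟩ := hBne B hB
    obtain ⟨y, hy⟩ := hBne B' hB'
    obtain ⟨d, hd, hdx⟩ := hRtrans x y
    refine ⟨⟨d, hd⟩, hdisj _ (himg ⟨d, hd⟩ B hB) _ hB' (d x) ⟨x, hx, rfl⟩ ?_⟩
    rw [hdx]; exact hy
  obtain ⟨B₀, hB₀, Bb, hBb, Bc, hBc, hab, hac, hbc⟩ := hthree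
  obtain ⟨ω₀, hω₀⟩ := hBne B₀ hB₀
  -- |Ω| = 2n
  have hcardΩ : Nat.card Ω = 2 * n := by
    have e : Function.Bijective (fun d : ↥R => (↑d : Equiv.Perm Ω) ω₀) := by
      constructor
      · intro d e h
        have h1 : ((↑e : Equiv.Perm Ω)⁻¹ * ↑d) ω₀ = ω₀ := by
          simp [Equiv.Perm.mul_apply, h]
        have h2 := hRfree _ (R.mul_mem (R.inv_mem e.2) d.2) ω₀ h1
        have h3 : (↑d : Equiv.Perm Ω) = ↑e := by
          have := inv_mul_eq_one.mp h2
          exact this.symm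
        exact Subtype.ext h3
      · intro y
        obtain ⟨d, hd, hdy⟩ := hRtrans ω₀ y
        exact ⟨⟨d, hd⟩, hdy⟩
    rw [← Nat.card_eq_of_bijective _ e, Nat.card_congr φ.toEquiv, DihedralGroup.nat_card]
  -- n ≥ 6
  have hdisj' : ∀ B ∈ 𝓑, ∀ B' ∈ 𝓑, B ≠ B' → Disjoint B B' := by
    intro B hB B' hB' hne
    rw [Set.disjoint_left]
    intro x hx hx'
    exact hne (hdisj B hB B' hB' x hx hx')
  have hn6 : 6 ≤ n := by
    have f1 : (Bb ∪ Bc).ncard = 8 := by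
      rw [Set.ncard_union_eq (hdisj' _ hBb _ hBc hbc) (Set.toFinite _) (Set.toFinite _),
        hsize _ hBb, hsize _ hBc]
    have f2 : (B₀ ∪ (Bb ∪ Bc)).ncard = 12 := by
      rw [Set.ncard_union_eq ?_ (Set.toFinite _) (Set.toFinite _), hsize _ hB₀, f1]
      exact Set.disjoint_union_right.mpr ⟨hdisj' _ hB₀ _ hBb hab, hdisj' _ hB₀ _ hBc hac⟩
    have f3 : (B₀ ∪ (Bb ∪ Bc)).ncard ≤ (Set.univ : Set Ω).ncard :=
      Set.ncard_le_ncard (Set.subset_univ _) (Set.toFinite _)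
    rw [f2, Set.ncard_univ, hcardΩ] at f3
    omega
  -- the stabilizer of B₀ in R
  let RB : Subgroup ↥R :=
    { carrier := {d : ↥R | (↑d : Equiv.Perm Ω) '' B₀ = B₀}
      one_mem' := by simp
      mul_mem' := by
        intro a b ha hb
        show (↑(a * b) : Equiv.Perm Ω) '' B₀ = B₀
        rw [Subgroup.coe_mul, perm_image_mul]
        rw [Set.mem_setOf_eq] at ha hb
        rw [hb, ha]
      inv_mem' := by
        intro a ha
        show (↑(a⁻¹) : Equiv.Perm Ω) '' B₀ = B₀
        rw [Set.mem_setOf_eq] at ha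
        rw [Subgroup.coe_inv]
        exact perm_image_inv _ ha }
  have hRBmem : ∀ d : ↥R, d ∈ RB ↔ (↑d : Equiv.Perm Ω) '' B₀ = B₀ := fun d => Iff.rfl
  -- |RB| = 4
  have hcardRB : Nat.card ↥RB = 4 := by
    have e : Function.Bijective (fun d : ↥RB =>
        (⟨(↑(↑d : ↥R) : Equiv.Perm Ω) ω₀, by
          have h := (hRBmem _).mp d.2
          exact h ▸ Set.mem_image_of_mem _ hω₀⟩ : ↥B₀)) := by
      constructor
      · intro d e h
        have h0 : (↑(↑d : ↥R) : Equiv.Perm Ω) ω₀ = (↑(↑e : ↥R) : Equiv.Perm Ω) ω₀ :=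
          congrArg Subtype.val h
        have h1 : ((↑(↑e : ↥R) : Equiv.Perm Ω)⁻¹ * ↑(↑d : ↥R)) ω₀ = ω₀ := by
          simp [Equiv.Perm.mul_apply, h0]
        have h2 := hRfree _ (R.mul_mem (R.inv_mem (↑e : ↥R).2) (↑d : ↥R).2) ω₀ h1
        have h3 : (↑(↑d : ↥R) : Equiv.Perm Ω) = ↑(↑e : ↥R) := (inv_mul_eq_one.mp h2).symm
        exact Subtype.ext (Subtype.ext h3)
      · rintro ⟨b, hb⟩
        obtain ⟨d, hd, hdb⟩ := hRtrans ω₀ b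
        have hmem : (⟨d, hd⟩ : ↥R) ∈ RB := by
          rw [hRBmem]
          refine hdisj _ (himg ⟨d, hd⟩ B₀ hB₀) _ hB₀ (d ω₀) ⟨ω₀, hω₀, rfl⟩ ?_
          rw [hdb]; exact hb
        exact ⟨⟨⟨d, hd⟩, hmem⟩, Subtype.ext hdb⟩
    rw [Nat.card_eq_of_bijective _ e, Nat.card_coe_set_eq, hsize _ hB₀]
  have hcardRBset : (RB : Set ↥R).ncard = 4 := by
    rw [← Nat.card_coe_set_eq]
    exact hcardRB
  -- every element of RB has order dividing 4
  have hpow4 : ∀ d : ↥R, d ∈ RB → d ^ 4 = 1 := by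
    intro d hd
    have h1 : (⟨d, hd⟩ : ↥RB) ^ 4 = 1 := by
      rw [← hcardRB]
      exact pow_card_eq_one'
    have h2 := congrArg (Subtype.val : ↥RB → ↥R) h1
    simpa using h2
  -- conjugation of rotations
  have hconj : ∀ u d : ↥R, (∃ i, φ u = r i) →
      d * u * d⁻¹ = u ∨ d * u * d⁻¹ = u⁻¹ := by
    rintro u d ⟨i, hi⟩
    rcases dihedral_conj_r (φ d) i with h | h <;> rw [← hi] at h
    · left
      apply φ.injective
      rw [map_mul, map_mul, map_inv]
      exact h
    · right
      apply φ.injective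
      rw [map_mul, map_mul, map_inv, map_inv]
      exact h
  -- a rotation fixing one block fixes all blocks
  have hstabAll : ∀ u : ↥R, (∃ i, φ u = r i) → ∀ B ∈ 𝓑, (↑u : Equiv.Perm Ω) '' B = B →
      ∀ C ∈ 𝓑, (↑u : Equiv.Perm Ω) '' C = C := by
    intro u hu B hB hfix C hC
    obtain ⟨d, hd⟩ := htransB B hB C hC
    rcases hconj u d hu with h | h
    · have hud : u * d = d * u := by
        calc u * d = d * u * d⁻¹ * d := by rw [h]
          _ = d * u := by group
      have key : (↑(u * d) : Equiv.Perm Ω) '' B = (↑(d * u) : Equiv.Perm Ω) '' B := by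
        rw [hud]
      rw [Subgroup.coe_mul, Subgroup.coe_mul, perm_image_mul, perm_image_mul, hfix, hd] at key
      exact key
    · have h2 : d * u⁻¹ * d⁻¹ = u := by
        have h3 := congrArg Inv.inv h
        rwa [mul_inv_rev, mul_inv_rev, inv_inv, inv_inv, ← mul_assoc] at h3
      have hud : u * d = d * u⁻¹ := by
        calc u * d = d * u⁻¹ * d⁻¹ * d := by rw [h2]
          _ = d * u⁻¹ := by group
      have hinvB : (↑(u⁻¹) : Equiv.Perm Ω) '' B = B := by
        rw [Subgroup.coe_inv]
        exact perm_image_inv _ hfix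
      have key : (↑(u * d) : Equiv.Perm Ω) '' B = (↑(d * u⁻¹) : Equiv.Perm Ω) '' B := by
        rw [hud]
      rw [Subgroup.coe_mul, Subgroup.coe_mul, perm_image_mul, perm_image_mul, hinvB, hd] at key
      exact key
  have hKmem : ∀ u : ↥R, (∀ B ∈ 𝓑, (↑u : Equiv.Perm Ω) '' B = B) →
      (↑u : Equiv.Perm Ω) ∈ K := fun u h => (hK _).mpr ⟨hRG u.2, h⟩
  -- there is a nontrivial rotation in RB
  have hrT : ∃ i : ZMod n, i ≠ 0 ∧ ∃ d : ↥R, d ∈ RB ∧ φ d = r i := by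
    by_contra hcon
    push_neg at hcon
    have hx : ∃ d : ↥R, d ∈ RB ∧ d ≠ 1 := by
      by_contra h
      push_neg at h
      have hsub : (RB : Set ↥R) ⊆ {1} := fun d hd => h d hd
      have := Set.ncard_le_ncard hsub (Set.toFinite _)
      rw [hcardRBset, Set.ncard_singleton] at this
      omega
    obtain ⟨x, hxRB, hx1⟩ := hx
    have hy : ∃ d : ↥R, d ∈ RB ∧ d ≠ 1 ∧ d ≠ x := by
      by_contra h
      push_neg at h
      have hsub : (RB : Set ↥R) ⊆ {1, x} := by
        intro d hd
        rcases eq_or_ne d 1 with h1 | h1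
        · exact Or.inl h1
        · exact Or.inr (h d hd h1)
      have h5 := Set.ncard_le_ncard hsub (Set.toFinite _)
      have h6 : ({1, x} : Set ↥R).ncard ≤ 2 := by
        have := Set.ncard_insert_le (1 : ↥R) ({x} : Set ↥R)
        rw [Set.ncard_singleton] at this
        omega
      rw [hcardRBset] at h5
      omega
    obtain ⟨y, hyRB, hy1, hyx⟩ := hy
    have hsr : ∀ d : ↥R, d ∈ RB → d ≠ 1 → ∃ a, φ d = sr a := by
      intro d hd hd1
      rcases hφd : φ d with i | i
      · exfalso
        rcases eq_or_ne i 0 with rfl | hi0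
        · exact hd1 (φ.injective (by rw [hφd, map_one, one_def]))
        · exact hcon i hi0 d hd hφd
      · exact ⟨i, rfl⟩
    obtain ⟨a, ha⟩ := hsr x hxRB hx1
    obtain ⟨b, hb⟩ := hsr y hyRB hy1
    have hba : b ≠ a := by
      intro h
      exact hyx (φ.injective (by rw [ha, hb, h]))
    refine hcon (a - b) (sub_ne_zero.mpr (fun h => hba h.symm)) (y * x)
      (RB.mul_mem hyRB hxRB) ?_
    rw [map_mul, ha, hb, sr_mul_sr]
  -- the central involution z
  have hz : ∃ i₀ : ZMod n, i₀ ≠ 0 ∧ i₀ + i₀ = 0 ∧ ∃ d : ↥R, d ∈ RB ∧ φ d = r i₀ := by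
    obtain ⟨i, hi0, d, hdRB, hdφ⟩ := hrT
    by_cases hii : i + i = 0
    · exact ⟨i, hi0, hii, d, hdRB, hdφ⟩
    · refine ⟨i + i, hii, ?_, d * d, RB.mul_mem hdRB hdRB, by rw [map_mul, hdφ, r_mul_r]⟩
      have h4 := hpow4 d hdRB
      have h5 : φ (d ^ 4) = 1 := by rw [h4, map_one]
      rw [map_pow, hdφ] at h5
      have h6 : (r i : DihedralGroup n) ^ 4 = r (i + i + i + i) := by
        rw [pow_succ, pow_succ, pow_succ, pow_one, r_mul_r, r_mul_r, r_mul_r]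
      rw [h6, one_def] at h5
      have h7 : i + i + i + i = 0 := r.injEq _ _ ▸ h5
      have h8 : (i + i) + (i + i) = i + i + i + i := by ring
      rw [h8]
      exact h7
  obtain ⟨i₀, hi₀0, hi₀2, zR, hzRB, hzφ⟩ := hz
  have hi₀val : 2 * i₀.val = n := (zmod_two_val hi₀2).resolve_left hi₀0
  have hzrot : ∃ i, φ zR = r i := ⟨i₀, hzφ⟩
  have hzfix : ∀ B ∈ 𝓑, (↑zR : Equiv.Perm Ω) '' B = B :=
    hstabAll zR hzrot B₀ hB₀ ((hRBmem zR).mp hzRB)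
  have hzK : (↑zR : Equiv.Perm Ω) ∈ K := hKmem zR hzfix
  have hzne1 : zR ≠ 1 := by
    intro hh
    apply hi₀0
    have : φ zR = 1 := by rw [hh, map_one]
    rw [hzφ, one_def] at this
    exact r.injEq _ _ ▸ this
  -- the set R ⊓ K is {1, z}
  have hNset : ((R ⊓ K : Subgroup (Equiv.Perm Ω)) : Set (Equiv.Perm Ω)) =
      {1, (↑zR : Equiv.Perm Ω)} := by
    ext σ
    simp only [Subgroup.coe_inf, Set.mem_inter_iff, SetLike.mem_coe, Set.mem_insert_iff,
      Set.mem_singleton_iff]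
    constructor
    · rintro ⟨hσR, hσK⟩
      set u : ↥R := ⟨σ, hσR⟩ with hu
      have hu2 : u * u = 1 := by
        apply Subtype.ext
        have := hEA σ hσK
        rw [pow_two] at this
        simpa using this
      rcases hφu : φ u with i | i
      · have hii : i + i = 0 := by
          have h7 : φ (u * u) = 1 := by rw [hu2, map_one]
          rw [map_mul, hφu, r_mul_r, one_def] at h7
          exact r.injEq _ _ ▸ h7
        rcases zmod_two_val hii with h0 | hvn
        · left
          have : u = 1 := φ.injective (by rw [hφu, h0, map_one, one_def])
          exact congrArg Subtype.val this
        · right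
          have hival : i.val = i₀.val := by omega
          have hieq : i = i₀ := ZMod.val_injective n hival
          have : u = zR := φ.injective (by rw [hφu, hzφ, hieq])
          exact congrArg Subtype.val this
      · exfalso
        set g₁ : ↥R := φ.symm (r 1) with hg₁def
        have hg₁φ : φ g₁ = r 1 := φ.apply_symm_apply _
        set w : ↥R := g₁ * u * g₁⁻¹ with hwdef
        have hσfix : ∀ B ∈ 𝓑, σ '' B = B := ((hK σ).mp hσK).2
        have hwK : (↑w : Equiv.Perm Ω) ∈ K := by
          apply hKmem
          intro B hB
          have hB' : (↑(g₁⁻¹) : Equiv.Perm Ω) '' B ∈ 𝓑 := himg g₁⁻¹ B hB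
          have hstep : σ '' ((↑(g₁⁻¹) : Equiv.Perm Ω) '' B) = (↑(g₁⁻¹) : Equiv.Perm Ω) '' B :=
            hσfix _ hB'
          have : (↑w : Equiv.Perm Ω) '' B
              = (↑g₁ : Equiv.Perm Ω) '' (σ '' ((↑(g₁⁻¹) : Equiv.Perm Ω) '' B)) := by
            rw [hwdef, Subgroup.coe_mul, Subgroup.coe_mul, perm_image_mul, perm_image_mul]
          rw [this, hstep, Subgroup.coe_inv, ← perm_image_mul]
          simp
        have hvK : (↑(u * w) : Equiv.Perm Ω) ∈ K := by
          rw [Subgroup.coe_mul]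
          exact K.mul_mem hσK hwK
        have hv2 : (u * w) * (u * w) = 1 := by
          apply Subtype.ext
          have := hEA _ hvK
          rw [pow_two] at this
          simpa using this
        have hφw : φ w = sr (i - 1 + -1) := by
          rw [hwdef, map_mul, map_mul, map_inv, hg₁φ, hφu, r_inv, r_mul_sr, sr_mul_r]
        have hφv : φ (u * w) = r (i - 1 + -1 - i) := by
          rw [map_mul, hφu, hφw, sr_mul_sr]
        have h10 : φ ((u * w) * (u * w)) = 1 := by rw [hv2, map_one]
        rw [map_mul, hφv, r_mul_r, one_def] at h10
        have h11 : (i - 1 + -1 - i) + (i - 1 + -1 - i) = (0 : ZMod n) :=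
          r.injEq _ _ ▸ h10
        have h12 : ((4 : ℕ) : ZMod n) = 0 := by
          have : (i - 1 + -1 - i) + (i - 1 + -1 - i) = -(((4 : ℕ) : ZMod n)) := by
            push_cast
            ring
          rw [this] at h11
          exact neg_eq_zero.mp h11
        have h13 : n ∣ 4 := (ZMod.natCast_eq_zero_iff _ _).mp h12
        have := Nat.le_of_dvd (by norm_num) h13
        omega
    · rintro (rfl | rfl)
      · exact ⟨R.one_mem, K.one_mem⟩
      · exact ⟨zR.2, hzK⟩
  have hzne1' : (1 : Equiv.Perm Ω) ≠ ↑zR := by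
    intro hh
    exact hzne1 (Subtype.ext hh.symm)
  have hcard2 : Nat.card (R ⊓ K : Subgroup (Equiv.Perm Ω)) = 2 := by
    calc Nat.card (R ⊓ K : Subgroup (Equiv.Perm Ω))
        = ((R ⊓ K : Subgroup (Equiv.Perm Ω)) : Set (Equiv.Perm Ω)).ncard :=
          (Nat.card_coe_set_eq _).symm
      _ = ({1, (↑zR : Equiv.Perm Ω)} : Set (Equiv.Perm Ω)).ncard := by rw [hNset]
      _ = 2 := Set.ncard_pair hzne1'
  -- part 2
  set g₁ : ↥R := φ.symm (r 1) with hg₁def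
  have hg₁φ : φ g₁ = r 1 := φ.apply_symm_apply _
  -- every "rotation" of R is a power of g₁
  have hpowd : ∀ d : ↥R, (∃ i, φ d = r i) →
      ∃ j : ℤ, ((↑g₁ : Equiv.Perm Ω)) ^ j = ↑d := by
    rintro d ⟨i, hi⟩
    refine ⟨(i.val : ℤ), ?_⟩
    have hnat : g₁ ^ (i.val : ℕ) = d := by
      apply φ.injective
      rw [map_pow, hg₁φ, r_one_pow, hi]
      congr 1
      exact ZMod.natCast_rightInverse i
    rw [zpow_natCast, ← hnat]
    simp
  -- RB contains a reflection
  have hsrT : ∃ t : ↥R, t ∈ RB ∧ ∃ a, φ t = sr a := by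
    by_contra hcon
    push_neg at hcon
    have hsub : ∀ d : ↥R, d ∈ RB → d = 1 ∨ d = zR := by
      intro d hd
      rcases hφd : φ d with i | i
      · have hfixall := hstabAll d ⟨i, hφd⟩ B₀ hB₀ ((hRBmem d).mp hd)
        have hdK := hKmem d hfixall
        have hd2 : d * d = 1 := by
          apply Subtype.ext
          have := hEA _ hdK
          rw [pow_two] at this
          simpa using this
        have hii : i + i = 0 := by
          have h7 : φ (d * d) = 1 := by rw [hd2, map_one]
          rw [map_mul, hφd, r_mul_r, one_def] at h7
          exact r.injEq _ _ ▸ h7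
        rcases zmod_two_val hii with h0 | hvn
        · left
          exact φ.injective (by rw [hφd, h0, map_one, one_def])
        · right
          have hival : i.val = i₀.val := by omega
          have hieq : i = i₀ := ZMod.val_injective n hival
          exact φ.injective (by rw [hφd, hzφ, hieq])
      · exact absurd hφd (hcon d hd i)
    have hsub' : (RB : Set ↥R) ⊆ {1, zR} := fun d hd => hsub d hd
    have h5 := Set.ncard_le_ncard hsub' (Set.toFinite _)
    have h6 : ({1, zR} : Set ↥R).ncard ≤ 2 := by
      have := Set.ncard_insert_le (1 : ↥R) ({zR} : Set ↥R)
      rw [Set.ncard_singleton] at this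
      omega
    rw [hcardRBset] at h5
    omega
  -- powers of g₁ reach every block from B₀
  have hreach : ∀ B ∈ 𝓑, ∃ j : ℤ, ((↑g₁ : Equiv.Perm Ω) ^ j) '' B₀ = B := by
    intro B hB
    obtain ⟨d, hd⟩ := htransB B₀ hB₀ B hB
    rcases hφd : φ d with i | i
    · obtain ⟨j, hj⟩ := hpowd d ⟨i, hφd⟩
      exact ⟨j, by rw [hj, hd]⟩
    · obtain ⟨t, htRB, a, hta⟩ := hsrT
      have hrot : ∃ k, φ (d * t) = r k := ⟨a - i, by rw [map_mul, hφd, hta, sr_mul_sr]⟩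
      obtain ⟨j, hj⟩ := hpowd (d * t) hrot
      refine ⟨j, ?_⟩
      rw [hj, Subgroup.coe_mul, perm_image_mul, (hRBmem t).mp htRB, hd]
  refine ⟨hcard2, (↑g₁ : Equiv.Perm Ω), hRG g₁.2, ?_, ?_⟩
  · intro B₁ hB₁ B₂ hB₂
    obtain ⟨j₁, hj₁⟩ := hreach B₁ hB₁
    obtain ⟨j₂, hj₂⟩ := hreach B₂ hB₂
    refine ⟨j₂ - j₁, ?_⟩
    have h0 := perm_image_inv _ hj₁
    have hsplit : (↑g₁ : Equiv.Perm Ω) ^ (j₂ - j₁)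
        = (↑g₁ : Equiv.Perm Ω) ^ j₂ * ((↑g₁ : Equiv.Perm Ω) ^ j₁)⁻¹ := by
      rw [zpow_sub]
    rw [hsplit, perm_image_mul, h0, hj₂]
  · intro j B hB hfix C hC
    have hco : ((↑g₁ : Equiv.Perm Ω)) ^ j = ↑(g₁ ^ j) := by simp
    rw [hco] at hfix ⊢
    refine hstabAll (g₁ ^ j) ?_ B hB hfix C hC
    have hφj : φ (g₁ ^ j) = (r 1 : DihedralGroup n) ^ j := by rw [map_zpow, hg₁φ]
    have hmem : (r 1 : DihedralGroup n) ^ j ∈ rotSub n :=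
      Subgroup.zpow_mem _ (mem_rotSub.mpr ⟨1, rfl⟩) j
    obtain ⟨i, hi⟩ := mem_rotSub.mp hmem
    exact ⟨i, by rw [hφj, hi]⟩
end

section
/- Let p ≡ 3 (mod 4) be a prime, Δ = {1,…,p}, G = Sym(Δ) × ⟨c⟩ with |c| = 2, H = Alt(Δ \ {1}) ≅ A_{p−1}, and Ω = [G : H] of size 4p. Let D = ⟨(1 2 … p), (2,p)(3,p−1)⋯((p+1)/2,(p+3)/2)⟩ × ⟨c⟩. Then D ≅ D_{2p} × Z₂ ≅ D_{4p}, D ∩ H = 1, |D| = |G : H| = 4p, and hence D acts regularly on Ω, so G is a d-group of degree 4p. -/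
open Equiv Equiv.Perm

open Equiv Equiv.Perm

def stmt19.dphi (p : ℕ) : DihedralGroup p →* Equiv.Perm (ZMod p) where
  toFun x := match x with
    | .r i => Equiv.addLeft i
    | .sr i => Equiv.neg (ZMod p) * Equiv.addLeft i
  map_one' := by
    show Equiv.addLeft (0 : ZMod p) = 1
    ext x; simp
  map_mul' := by
    rintro (i | i) (j | j) <;> ext x <;>
      simp [Equiv.Perm.mul_apply] <;> ring

@[simp] lemma stmt19.dphi_r (p : ℕ) (i : ZMod p) :
    stmt19.dphi p (.r i) = Equiv.addLeft i := rfl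

@[simp] lemma stmt19.dphi_sr (p : ℕ) (i : ZMod p) :
    stmt19.dphi p (.sr i) = Equiv.neg (ZMod p) * Equiv.addLeft i := rfl

lemma stmt19.dphi_injective (p : ℕ) [Fact (2 < p)] :
    Function.Injective (stmt19.dphi p) := by
  rw [injective_iff_map_eq_one]
  rintro (i | i) h
  · have h0 := DFunLike.congr_fun h 0
    simp at h0
    simp [h0]
  · have h0 := DFunLike.congr_fun h 0
    have h1 := DFunLike.congr_fun h 1
    simp [Equiv.Perm.mul_apply] at h0 h1
    rw [h0] at h1
    simp at h1
    exact absurd h1 (ZMod.neg_one_ne_one)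

lemma stmt19.dphi_range (p : ℕ) [NeZero p] :
    (stmt19.dphi p).range
      = Subgroup.closure {Equiv.addLeft (1 : ZMod p), Equiv.neg (ZMod p)} := by
  have hgen : Subgroup.closure {DihedralGroup.r (1 : ZMod p), DihedralGroup.sr 0}
      = (⊤ : Subgroup (DihedralGroup p)) := by
    rw [eq_top_iff]
    rintro (i | i) -
    · have : DihedralGroup.r i = (DihedralGroup.r (1 : ZMod p)) ^ (i.val) := by
        rw [DihedralGroup.r_one_pow]
        congr 1
        simp [ZMod.natCast_val, ZMod.cast_id]
      rw [this]
      exact pow_mem (Subgroup.subset_closure (by simp)) _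
    · have : DihedralGroup.sr i = DihedralGroup.sr 0 * DihedralGroup.r i := by simp
      rw [this]
      refine mul_mem (Subgroup.subset_closure (by simp)) ?_
      have : DihedralGroup.r i = (DihedralGroup.r (1 : ZMod p)) ^ (i.val) := by
        rw [DihedralGroup.r_one_pow]
        congr 1
        simp [ZMod.natCast_val, ZMod.cast_id]
      rw [this]
      exact pow_mem (Subgroup.subset_closure (by simp)) _
  rw [MonoidHom.range_eq_map, ← hgen, MonoidHom.map_closure]
  congr 1
  rw [Set.image_insert_eq, Set.image_singleton]
  simp only [stmt19.dphi_r, stmt19.dphi_sr]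
  congr 1
  ext σ
  constructor
  · rintro rfl; ext x; simp
  · rintro rfl; ext x; simp

lemma stmt19.sign_neg (p : ℕ) [NeZero p] (hp : p.Prime) (hp4 : p % 4 = 3) :
    Equiv.Perm.sign (Equiv.neg (ZMod p)) = -1 := by
  have hp3 : 3 ≤ p := hp4 ▸ Nat.mod_le p 4
  haveI : Fact p.Prime := ⟨hp⟩
  haveI : Fact (2 < p) := ⟨by omega⟩
  set σ : Equiv.Perm (ZMod p) := Equiv.neg (ZMod p) with hσ
  have htwo : (2 : ZMod p) ≠ 0 := by
    intro h
    have : ((2 : ℕ) : ZMod p) = 0 := by exact_mod_cast h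
    rw [ZMod.natCast_eq_zero_iff] at this
    have := Nat.le_of_dvd (by norm_num) this
    omega
  -- order of σ is 2
  have hσ1 : σ ≠ 1 := by
    intro h
    have := DFunLike.congr_fun h 1
    simp [hσ] at this
    exact ZMod.neg_one_ne_one this
  have hord : orderOf σ = 2 := by
    refine orderOf_eq_prime ?_ hσ1
    ext x; simp [hσ, Equiv.Perm.mul_apply, sq]
  -- all cycle lengths are 2
  have hcyc : ∀ n ∈ σ.cycleType, n = 2 := by
    intro n hn
    have h2 : 2 ≤ n := Equiv.Perm.two_le_of_mem_cycleType hn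
    have hdvd : n ∣ 2 := by
      rw [← hord, ← Equiv.Perm.lcm_cycleType]
      exact Multiset.dvd_lcm hn
    rcases (Nat.dvd_prime Nat.prime_two).mp hdvd with h | h
    · omega
    · exact h
  have hrep := Multiset.eq_replicate_card.mpr hcyc
  -- support is everything except 0
  have hsupp : σ.support = {(0 : ZMod p)}ᶜ := by
    ext x
    simp only [Equiv.Perm.mem_support, Finset.mem_compl, Finset.mem_singleton]
    constructor
    · intro h hx; apply h; simp [hσ, hx]
    · intro h hx
      apply h
      rw [hσ] at hx
      simp only [Equiv.neg_apply] at hx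
      have h2x : (2 : ZMod p) * x = 0 := by
        rw [two_mul]; nth_rewrite 1 [← hx]; simp
      rcases mul_eq_zero.mp h2x with h2 | hx0
      · exact absurd h2 htwo
      · exact hx0
  have hsum : σ.cycleType.sum = p - 1 := by
    rw [Equiv.Perm.sum_cycleType, hsupp]
    simp [Finset.card_compl, ZMod.card]
  have hs2 : σ.cycleType.sum = Multiset.card σ.cycleType * 2 := by
    conv_lhs => rw [hrep]
    simp [Multiset.sum_replicate, smul_eq_mul]
  rw [Equiv.Perm.sign_of_cycleType, hsum]
  have hodd : Odd (p - 1 + Multiset.card σ.cycleType) := by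
    rw [Nat.odd_iff]
    omega
  exact Odd.neg_one_pow hodd
open Equiv Equiv.Perm

/-- The canonical hom `D_{2·(2p)} → D_{2p} × Z₂` given by reducing indices. -/
def stmt19.psi (p : ℕ) : DihedralGroup (2 * p) →* DihedralGroup p × Multiplicative (ZMod 2) where
  toFun x := match x with
    | .r i => (.r (ZMod.cast i), Multiplicative.ofAdd (ZMod.cast i))
    | .sr i => (.sr (ZMod.cast i), Multiplicative.ofAdd (ZMod.cast i))
  map_one' := by
    show ((DihedralGroup.r (ZMod.cast (0 : ZMod (2*p))), Multiplicative.ofAdd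
      (ZMod.cast (0 : ZMod (2*p)) : ZMod 2)) : DihedralGroup p × Multiplicative (ZMod 2)) = 1
    have h1 : (ZMod.cast (0 : ZMod (2*p)) : ZMod p) = 0 := by simp
    have h2 : (ZMod.cast (0 : ZMod (2*p)) : ZMod 2) = 0 := by simp
    rw [h1, h2]
    rfl
  map_mul' := by
    have hP : ∀ a b : ZMod (2*p), (ZMod.cast (a + b) : ZMod p) = ZMod.cast a + ZMod.cast b :=
      fun a b => ZMod.cast_add (dvd_mul_left p 2) a b
    have hP' : ∀ a b : ZMod (2*p), (ZMod.cast (a - b) : ZMod p) = ZMod.cast a - ZMod.cast b :=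
      fun a b => ZMod.cast_sub (dvd_mul_left p 2) a b
    have h2 : ∀ a b : ZMod (2*p), (ZMod.cast (a + b) : ZMod 2) = ZMod.cast a + ZMod.cast b :=
      fun a b => ZMod.cast_add (dvd_mul_right 2 p) a b
    have h2' : ∀ a b : ZMod (2*p), (ZMod.cast (a - b) : ZMod 2) = ZMod.cast a + ZMod.cast b := by
      intro a b
      rw [ZMod.cast_sub (dvd_mul_right 2 p), CharTwo.sub_eq_add]
    rintro (i | i) (j | j) <;> refine Prod.ext ?_ ?_
    · exact congrArg DihedralGroup.r (hP i j)
    · show Multiplicative.ofAdd (ZMod.cast (i + j) : ZMod 2) = _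
      rw [h2, ofAdd_add]; rfl
    · show DihedralGroup.sr (ZMod.cast (j - i) : ZMod p) = _
      rw [hP']; rfl
    · show Multiplicative.ofAdd (ZMod.cast (j - i) : ZMod 2) = _
      rw [h2', add_comm, ofAdd_add]; rfl
    · exact congrArg DihedralGroup.sr (hP i j)
    · show Multiplicative.ofAdd (ZMod.cast (i + j) : ZMod 2) = _
      rw [h2, ofAdd_add]; rfl
    · show DihedralGroup.r (ZMod.cast (j - i) : ZMod p) = _
      rw [hP']; rfl
    · show Multiplicative.ofAdd (ZMod.cast (j - i) : ZMod 2) = _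
      rw [h2', add_comm, ofAdd_add]; rfl

lemma stmt19.cast_inj_of_coprime (p : ℕ) [NeZero p] (hodd : p % 2 = 1)
    {i j : ZMod (2 * p)} (h2 : (ZMod.cast i : ZMod 2) = ZMod.cast j)
    (hp : (ZMod.cast i : ZMod p) = ZMod.cast j) : i = j := by
  haveI : NeZero (2 * p) := ⟨by have := NeZero.ne p; positivity⟩
  have hco : Nat.Coprime 2 p := by
    exact Nat.coprime_two_left.mpr (Nat.odd_iff.mpr hodd)
  rw [← ZMod.natCast_val i, ← ZMod.natCast_val j, ZMod.natCast_eq_natCast_iff] at h2 hp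
  have := (Nat.modEq_and_modEq_iff_modEq_mul hco).mp ⟨h2, hp⟩
  have h := (ZMod.natCast_eq_natCast_iff _ _ _).mpr this
  rwa [ZMod.natCast_val, ZMod.natCast_val, ZMod.cast_id, ZMod.cast_id] at h

lemma stmt19.psi_bijective (p : ℕ) [NeZero p] (hodd : p % 2 = 1) :
    Function.Bijective (stmt19.psi p) := by
  haveI : NeZero (2 * p) := ⟨by have := NeZero.ne p; positivity⟩
  rw [Fintype.bijective_iff_injective_and_card]
  constructor
  · rintro (i | i) (j | j) h <;>
      simp only [stmt19.psi, MonoidHom.coe_mk, OneHom.coe_mk, Prod.mk.injEq,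
        DihedralGroup.r.injEq, DihedralGroup.sr.injEq, reduceCtorEq, false_and,
        and_false] at h
    · exact congrArg DihedralGroup.r (stmt19.cast_inj_of_coprime p hodd
        (Multiplicative.ofAdd.injective h.2) h.1)
    · exact congrArg DihedralGroup.sr (stmt19.cast_inj_of_coprime p hodd
        (Multiplicative.ofAdd.injective h.2) h.1)
  · rw [DihedralGroup.card, Fintype.card_prod, DihedralGroup.card,
      Fintype.card_multiplicative, ZMod.card]
    ring


/-- Let `p ≡ 3 (mod 4)` be prime, `Δ = Z_p`, `G = Sym(Δ) × ⟨c⟩` with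
`|c| = 2`, `H` the subgroup of pairs `(σ, 1)` with `σ` an even permutation fixing the
point `0` (so `H ≅ A_{p−1}`), and `D = ⟨x ↦ x+1, x ↦ −x⟩ × ⟨c⟩`. Then
`D ≅ D_{2p} × Z₂ ≅ D_{4p}`, `D ∩ H = 1`, `|D| = |G : H| = 4p`, and `D` acts
regularly on `Ω = [G : H]`, so `G` is a d-group of degree `4p`. -/
theorem stmt19 (p : ℕ) [NeZero p] (hp : p.Prime) (hp4 : p % 4 = 3)
    (H D : Subgroup (Equiv.Perm (ZMod p) × Multiplicative (ZMod 2)))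
    (hH : ∀ x : Equiv.Perm (ZMod p) × Multiplicative (ZMod 2),
      x ∈ H ↔ x.2 = 1 ∧ x.1 0 = 0 ∧ x.1 ∈ alternatingGroup (ZMod p))
    (hD : D = (Subgroup.closure
      {Equiv.addLeft (1 : ZMod p), Equiv.neg (ZMod p)}).prod ⊤) :
    Nonempty (D ≃* DihedralGroup p × Multiplicative (ZMod 2)) ∧
    Nonempty (D ≃* DihedralGroup (2 * p)) ∧
    D ⊓ H = ⊥ ∧
    Nat.card D = 4 * p ∧
    Nat.card ((Equiv.Perm (ZMod p) × Multiplicative (ZMod 2)) ⧸ H) = 4 * p ∧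
    (∀ x y : (Equiv.Perm (ZMod p) × Multiplicative (ZMod 2)) ⧸ H,
      ∃ d ∈ D, d • x = y) ∧
    (∀ d ∈ D, ∀ x : (Equiv.Perm (ZMod p) × Multiplicative (ZMod 2)) ⧸ H,
      d • x = x → d = 1) := by
  have hp3 : 3 ≤ p := hp4 ▸ Nat.mod_le p 4
  haveI : Fact p.Prime := ⟨hp⟩
  haveI : Fact (1 < p) := ⟨by omega⟩
  haveI : Fact (2 < p) := ⟨by omega⟩
  have hodd : p % 2 = 1 := by omega
  have hinj := stmt19.dphi_injective p
  have hrange := stmt19.dphi_range p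
  subst hD
  -- the two isomorphisms
  let eK : ↥(Subgroup.closure {Equiv.addLeft (1 : ZMod p), Equiv.neg (ZMod p)})
      ≃* DihedralGroup p :=
    (MulEquiv.subgroupCongr hrange).symm.trans (MonoidHom.ofInjective hinj).symm
  let e1 : ↥((Subgroup.closure
        {Equiv.addLeft (1 : ZMod p), Equiv.neg (ZMod p)}).prod ⊤)
      ≃* DihedralGroup p × Multiplicative (ZMod 2) :=
    (Subgroup.prodEquiv _ _).trans (MulEquiv.prodCongr eK (Subgroup.topEquiv (G := Multiplicative (ZMod 2))))
  let e2 := e1.trans (MulEquiv.ofBijective _ (stmt19.psi_bijective p hodd)).symm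
  -- intersection is trivial
  have hDH : (Subgroup.closure
      {Equiv.addLeft (1 : ZMod p), Equiv.neg (ZMod p)}).prod ⊤ ⊓ H = ⊥ := by
    rw [eq_bot_iff]
    rintro ⟨σ, t⟩ hx
    rw [Subgroup.mem_inf] at hx
    obtain ⟨hxD, hxH⟩ := hx
    rw [hH] at hxH
    obtain ⟨ht, hσ0, hσalt⟩ := hxH
    rw [Subgroup.mem_prod] at hxD
    have hσK := hxD.1
    rw [← hrange] at hσK
    obtain ⟨a, ha⟩ := hσK
    rw [Subgroup.mem_bot]
    simp only at ht
    cases a with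
    | r i =>
      simp only [stmt19.dphi_r] at ha
      have hi : i = 0 := by
        rw [← ha] at hσ0
        simpa using hσ0
      subst hi
      have hσ1 : σ = 1 := by rw [← ha]; ext x; simp
      simp [hσ1, ht, Prod.ext_iff]
    | sr i =>
      exfalso
      simp only [stmt19.dphi_sr] at ha
      have hi : i = 0 := by
        rw [← ha] at hσ0
        simp only [Equiv.Perm.mul_apply, Equiv.coe_addLeft, Equiv.neg_apply,
          add_zero, neg_eq_zero] at hσ0
        exact hσ0
      subst hi
      have hσn : σ = Equiv.neg (ZMod p) := by rw [← ha]; ext x; simp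
      have h1 := Equiv.Perm.mem_alternatingGroup.mp hσalt
      rw [hσn, stmt19.sign_neg p hp hp4] at h1
      exact absurd h1 (by decide)
  -- cardinality of D
  have hcardD : Nat.card ↥((Subgroup.closure
      {Equiv.addLeft (1 : ZMod p), Equiv.neg (ZMod p)}).prod
      (⊤ : Subgroup (Multiplicative (ZMod 2)))) = 4 * p := by
    rw [Nat.card_congr e1.toEquiv, Nat.card_prod, DihedralGroup.nat_card,
      Nat.card_eq_fintype_card, Fintype.card_multiplicative, ZMod.card]
    ring
  -- cardinality of the quotient
  haveI : MulAction.IsPretransitive (Equiv.Perm (ZMod p)) (ZMod p) :=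
    ⟨fun x y => ⟨Equiv.swap x y, Equiv.swap_apply_left x y⟩⟩
  have hQ : Nat.card ((Equiv.Perm (ZMod p) × Multiplicative (ZMod 2)) ⧸ H) = 4 * p := by
    set st := MulAction.stabilizer (Equiv.Perm (ZMod p)) (0 : ZMod p) with hst
    have hst_index : st.index = p := by
      rw [MulAction.index_stabilizer_of_transitive, Nat.card_zmod]
    have hst_card : Nat.card st * p = Nat.card (Equiv.Perm (ZMod p)) := by
      have h := Subgroup.card_mul_index st
      rwa [hst_index] at h
    set χ : ↥st →* ℤˣ := Equiv.Perm.sign.comp st.subtype with hχ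
    have h10 : (1 : ZMod p) ≠ -1 := fun h => ZMod.neg_one_ne_one h.symm
    have h01 : (0 : ZMod p) ≠ 1 := zero_ne_one
    have h0m1 : (0 : ZMod p) ≠ -1 := by
      intro h
      apply one_ne_zero (α := ZMod p)
      linear_combination h
    have hχsurj : Function.Surjective χ := by
      intro u
      rcases Int.units_eq_one_or u with rfl | rfl
      · exact ⟨1, map_one χ⟩
      · refine ⟨⟨Equiv.swap 1 (-1), ?_⟩, ?_⟩
        · rw [MulAction.mem_stabilizer_iff]
          show Equiv.swap (1 : ZMod p) (-1) 0 = 0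
          rw [Equiv.swap_apply_of_ne_of_ne h01 h0m1]
        · show Equiv.Perm.sign (Equiv.swap (1 : ZMod p) (-1)) = -1
          exact Equiv.Perm.sign_swap h10
    have hker : Nat.card ↥χ.ker * 2 = Nat.card ↥st := by
      have h1 := Subgroup.card_eq_card_quotient_mul_card_subgroup χ.ker
      rw [Nat.card_congr (QuotientGroup.quotientKerEquivOfSurjective χ hχsurj).toEquiv,
        Nat.card_eq_fintype_card (α := ℤˣ), Fintype.card_units_int] at h1
      omega
    have eH : ↥H ≃ ↥χ.ker :=
      { toFun := fun x => ⟨⟨x.1.1, by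
          rw [MulAction.mem_stabilizer_iff]
          exact ((hH x.1).mp x.2).2.1⟩, by
          exact MonoidHom.mem_ker.mpr
            (Equiv.Perm.mem_alternatingGroup.mp ((hH x.1).mp x.2).2.2)⟩
        invFun := fun y => ⟨(y.1.1, 1), by
          rw [hH]
          refine ⟨rfl, ?_, ?_⟩
          · exact MulAction.mem_stabilizer_iff.mp y.1.2
          · rw [Equiv.Perm.mem_alternatingGroup]
            exact MonoidHom.mem_ker.mp y.2⟩
        left_inv := fun x => by
          apply Subtype.ext
          rw [Prod.ext_iff]
          exact ⟨rfl, (((hH x.1).mp x.2).1).symm⟩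
        right_inv := fun y => by
          apply Subtype.ext
          apply Subtype.ext
          rfl }
    have hHcard : Nat.card ↥H = Nat.card ↥χ.ker := Nat.card_congr eH
    have hG' : Nat.card (Equiv.Perm (ZMod p) × Multiplicative (ZMod 2))
        = Nat.card (Equiv.Perm (ZMod p)) * 2 := by
      rw [Nat.card_prod, Nat.card_eq_fintype_card (α := Multiplicative (ZMod 2)),
        Fintype.card_multiplicative, ZMod.card]
    have h6 := Subgroup.card_eq_card_quotient_mul_card_subgroup H
    rw [hG', hHcard, ← hst_card, ← hker] at h6
    have hak : 0 < Nat.card ↥χ.ker := Nat.card_pos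
    have h7 : Nat.card ↥χ.ker *
        (Nat.card ((Equiv.Perm (ZMod p) × Multiplicative (ZMod 2)) ⧸ H))
        = Nat.card ↥χ.ker * (4 * p) := by
      rw [mul_comm (Nat.card ↥χ.ker)
        (Nat.card ((Equiv.Perm (ZMod p) × Multiplicative (ZMod 2)) ⧸ H)), ← h6]
      ring
    exact Nat.eq_of_mul_eq_mul_left hak h7
  -- the orbit map from D
  set Dgrp := (Subgroup.closure
      {Equiv.addLeft (1 : ZMod p), Equiv.neg (ZMod p)}).prod
      (⊤ : Subgroup (Multiplicative (ZMod 2))) with hDgrp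
  set f : ↥Dgrp → (Equiv.Perm (ZMod p) × Multiplicative (ZMod 2)) ⧸ H :=
    fun d => QuotientGroup.mk d.1 with hf
  have hfinj : Function.Injective f := by
    intro d1 d2 h
    rw [hf] at h
    simp only [QuotientGroup.eq] at h
    have hmem : (d1.1)⁻¹ * d2.1 ∈ Dgrp ⊓ H :=
      ⟨Subgroup.mul_mem _ (Subgroup.inv_mem _ d1.2) d2.2, h⟩
    rw [hDH, Subgroup.mem_bot] at hmem
    exact Subtype.ext (inv_mul_eq_one.mp hmem)
  have hfbij : Function.Bijective f := by
    rw [Nat.bijective_iff_injective_and_card]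
    exact ⟨hfinj, by rw [hcardD, hQ]⟩
  refine ⟨⟨e1⟩, ⟨e2⟩, hDH, hcardD, hQ, ?_, ?_⟩
  · -- transitivity
    intro x y
    obtain ⟨d1, hd1⟩ := hfbij.surjective x
    obtain ⟨d2, hd2⟩ := hfbij.surjective y
    refine ⟨d2.1 * (d1.1)⁻¹, Subgroup.mul_mem _ d2.2 (Subgroup.inv_mem _ d1.2), ?_⟩
    rw [← hd1, ← hd2, hf]
    show (d2.1 * (d1.1)⁻¹) • (QuotientGroup.mk d1.1 :
      (Equiv.Perm (ZMod p) × Multiplicative (ZMod 2)) ⧸ H) = QuotientGroup.mk d2.1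
    rw [MulAction.Quotient.smul_mk]
    congr 1
    show d2.1 * (d1.1)⁻¹ * d1.1 = d2.1
    group
  · -- freeness
    intro d hd x hdx
    obtain ⟨d1, hd1⟩ := hfbij.surjective x
    rw [← hd1, hf] at hdx
    rw [MulAction.Quotient.smul_mk, QuotientGroup.eq] at hdx
    have hmem : (d • d1.1)⁻¹ * d1.1 ∈ Dgrp ⊓ H := by
      refine ⟨?_, hdx⟩
      have : (d • d1.1)⁻¹ * d1.1 = (d1.1)⁻¹ * d⁻¹ * d1.1 := by
        rw [smul_eq_mul]; group
      rw [this]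
      exact Subgroup.mul_mem _ (Subgroup.mul_mem _ (Subgroup.inv_mem _ d1.2) (Subgroup.inv_mem _ hd)) d1.2
    rw [hDH, Subgroup.mem_bot] at hmem
    have hww : d⁻¹ = 1 := by
      have h := hmem
      rw [smul_eq_mul, mul_inv_rev] at h
      calc d⁻¹ = d1.1 * ((d1.1)⁻¹ * d⁻¹ * d1.1) * (d1.1)⁻¹ := by group
        _ = 1 := by rw [h]; group
    exact inv_eq_one.mp hww
end
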